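/- Let d ≥ 1, N ≥ 1, points x^1, …, x^N ∈ [0,1]^d, and weights W^1, …, W^N ≥ 0 with ∑_{m=1}^N W^m = 1 and max_m W^m ≤ A/N for some A ≥ 1. Let g : [0,1]^d × [0,1]^d → ℝ satisfy 0 < g̲ ≤ g(x, y) ≤ ḡ < ∞ for all x, y ∈ [0,1]^d, and let ω(δ) = sup{ |g(x, y) − g(x, y')| : x, y, y' ∈ [0,1]^d, ‖y − y'‖_∞ ≤ δ } denote its modulus of continuity in the second argument. Define the normalized backward weights W̃^m(y) = W^m g(x^m, y) / ∑_{k=1}^N W^k g(x^k, y). Then for every m ∈ {1,…,N} and all y, y' ∈ [0,1]^d, |W̃^m(y) − W̃^m(y')| ≤ (A / (N g̲)) (1 + ḡ / g̲) · ω(‖y − y'‖_∞). -/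

import Mathlib

open MeasureTheory ProbabilityTheory Filter Set
open scoped ENNReal NNReal

noncomputable section

/-- The closed unit cube `[0,1]^d` in `ℝ^d`. -/
def cubeIcc (d : ℕ) : Set (Fin d → ℝ) := Set.univ.pi fun _ => Set.Icc (0 : ℝ) 1

/-- The half-open unit cube `[0,1)^d` in `ℝ^d`. -/
def cubeIco (d : ℕ) : Set (Fin d → ℝ) := Set.univ.pi fun _ => Set.Ico (0 : ℝ) 1

/-- `IsGoodBox a b` : the box `∏ᵢ [aᵢ, bᵢ]` satisfies `0 ≤ aᵢ < bᵢ < 1` for all `i`. -/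
def IsGoodBox {d : ℕ} (a b : Fin d → ℝ) : Prop := ∀ i, 0 ≤ a i ∧ a i < b i ∧ b i < 1

/-- The closed box `∏ᵢ [aᵢ, bᵢ]` in `ℝ^d`. -/
def clBox {d : ℕ} (a b : Fin d → ℝ) : Set (Fin d → ℝ) :=
  Set.univ.pi fun i => Set.Icc (a i) (b i)

/-- The extreme norm distance `‖μ − ν‖_E` between two measures on `ℝ^d`:
the supremum over boxes `∏ᵢ [aᵢ, bᵢ]` with `0 ≤ aᵢ < bᵢ < 1` of `|μ(B) − ν(B)|`. -/
def extDist {d : ℕ} (μ ν : Measure (Fin d → ℝ)) : ℝ :=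
  ⨆ p : {q : (Fin d → ℝ) × (Fin d → ℝ) // IsGoodBox q.1 q.2},
    |(μ (clBox p.1.1 p.1.2)).toReal - (ν (clBox p.1.1 p.1.2)).toReal|

/-- The modulus of continuity of `g(x, ·)` (uniformly in `x`) on the unit cube:
`ω(δ) = sup { |g(x,y) − g(x,y')| : x, y, y' ∈ [0,1]^d, ‖y − y'‖_∞ ≤ δ }`. -/
def modCont {d : ℕ} (g : (Fin d → ℝ) → (Fin d → ℝ) → ℝ) (δ : ℝ) : ℝ :=
  ⨆ p : {q : (Fin d → ℝ) × (Fin d → ℝ) × (Fin d → ℝ) //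
      q.1 ∈ cubeIcc d ∧ q.2.1 ∈ cubeIcc d ∧ q.2.2 ∈ cubeIcc d ∧ ‖q.2.1 - q.2.2‖ ≤ δ},
    |g p.1.1 p.1.2.1 - g p.1.1 p.1.2.2|

/-- perturbation of normalized backward-sampling weights, from the
proof of Corollary 2: if the weights satisfy `∑ W^m = 1`, `0 ≤ W^m ≤ A/N`, and
`0 < g̲ ≤ g ≤ ḡ` on the cube, then the normalized backward weights
`W̃^m(y) = W^m g(x^m, y) / ∑ₖ W^k g(x^k, y)` satisfy
`|W̃^m(y) − W̃^m(y')| ≤ (A/(N g̲)) (1 + ḡ/g̲) ω(‖y − y'‖_∞)`. -/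
theorem backward_weight_perturbation
    {d N : ℕ}
    (x : Fin N → (Fin d → ℝ)) (hx : ∀ n, x n ∈ cubeIcc d)
    (W : Fin N → ℝ) (hWnn : ∀ n, 0 ≤ W n) (hWsum : ∑ n, W n = 1)
    (A : ℝ) (hA : 1 ≤ A) (hWmax : ∀ n, W n ≤ A / N)
    (g : (Fin d → ℝ) → (Fin d → ℝ) → ℝ) (glow gup : ℝ) (hglow : 0 < glow)
    (hg : ∀ x' ∈ cubeIcc d, ∀ y ∈ cubeIcc d, glow ≤ g x' y ∧ g x' y ≤ gup) :
    ∀ m : Fin N, ∀ y ∈ cubeIcc d, ∀ y' ∈ cubeIcc d,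
      |W m * g (x m) y / (∑ k, W k * g (x k) y) -
        W m * g (x m) y' / (∑ k, W k * g (x k) y')| ≤
      A / (N * glow) * (1 + gup / glow) * modCont g ‖y - y'‖ := by
  intro m y hy y' hy'
  have hN : (0 : ℝ) < N := by exact_mod_cast m.pos
  set δ := ‖y - y'‖ with hδ
  -- boundedness of the sup defining modCont
  have hbdd : BddAbove (Set.range fun p : {q : (Fin d → ℝ) × (Fin d → ℝ) × (Fin d → ℝ) //
      q.1 ∈ cubeIcc d ∧ q.2.1 ∈ cubeIcc d ∧ q.2.2 ∈ cubeIcc d ∧ ‖q.2.1 - q.2.2‖ ≤ δ} =>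
      |g p.1.1 p.1.2.1 - g p.1.1 p.1.2.2|) := by
    refine ⟨gup - glow, ?_⟩
    rintro r ⟨⟨⟨a, b, c⟩, ha, hb, hc, -⟩, rfl⟩
    have h1 := hg a ha b hb
    have h2 := hg a ha c hc
    simp only [abs_le]
    constructor <;> nlinarith [h1.1, h1.2, h2.1, h2.2]
  have hω : ∀ a ∈ cubeIcc d, |g a y - g a y'| ≤ modCont g δ := by
    intro a ha
    exact le_ciSup hbdd (⟨(a, y, y'), ha, hy, hy', le_rfl⟩ :
      {q : (Fin d → ℝ) × (Fin d → ℝ) × (Fin d → ℝ) //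
      q.1 ∈ cubeIcc d ∧ q.2.1 ∈ cubeIcc d ∧ q.2.2 ∈ cubeIcc d ∧ ‖q.2.1 - q.2.2‖ ≤ δ})
  have hωnn : 0 ≤ modCont g δ := le_trans (abs_nonneg _) (hω y hy)
  set ω := modCont g δ with hωdef
  set S := ∑ k, W k * g (x k) y with hSdef
  set S' := ∑ k, W k * g (x k) y' with hS'def
  have hSlow : glow ≤ S := by
    calc glow = ∑ k, W k * glow := by rw [← Finset.sum_mul, hWsum, one_mul]
    _ ≤ S := Finset.sum_le_sum fun k _ =>
        mul_le_mul_of_nonneg_left (hg (x k) (hx k) y hy).1 (hWnn k)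
  have hS'low : glow ≤ S' := by
    calc glow = ∑ k, W k * glow := by rw [← Finset.sum_mul, hWsum, one_mul]
    _ ≤ S' := Finset.sum_le_sum fun k _ =>
        mul_le_mul_of_nonneg_left (hg (x k) (hx k) y' hy').1 (hWnn k)
  have hSpos : 0 < S := lt_of_lt_of_le hglow hSlow
  have hS'pos : 0 < S' := lt_of_lt_of_le hglow hS'low
  have hSdiff : |S' - S| ≤ ω := by
    have : S' - S = ∑ k, W k * (g (x k) y' - g (x k) y) := by
      rw [hSdef, hS'def, ← Finset.sum_sub_distrib]; congr 1; ext k; ring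
    rw [this]
    calc |∑ k, W k * (g (x k) y' - g (x k) y)|
        ≤ ∑ k, |W k * (g (x k) y' - g (x k) y)| := Finset.abs_sum_le_sum_abs _ _
      _ ≤ ∑ k, W k * ω := by
          refine Finset.sum_le_sum fun k _ => ?_
          rw [abs_mul, abs_of_nonneg (hWnn k)]
          refine mul_le_mul_of_nonneg_left ?_ (hWnn k)
          rw [abs_sub_comm]; exact hω (x k) (hx k)
      _ = ω := by rw [← Finset.sum_mul, hWsum, one_mul]
  have hWm := hWmax m
  have hWmnn := hWnn m
  have hgm := hg (x m) (hx m) y hy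
  have hgm' := hg (x m) (hx m) y' hy'
  have hgmdiff : |g (x m) y - g (x m) y'| ≤ ω := hω (x m) (hx m)
  -- decomposition
  have hdecomp : W m * g (x m) y / S - W m * g (x m) y' / S' =
      W m * (g (x m) y - g (x m) y') / S +
      W m * g (x m) y' * (S' - S) / (S * S') := by
    field_simp
    ring
  rw [hdecomp]
  have hAN : 0 ≤ A / N := div_nonneg (by linarith) (le_of_lt hN)
  have ht1 : |W m * (g (x m) y - g (x m) y') / S| ≤ A / N * ω / glow := by
    rw [abs_div, abs_of_pos hSpos, abs_mul, abs_of_nonneg hWmnn]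
    exact div_le_div₀ (mul_nonneg hAN hωnn)
      (mul_le_mul hWm hgmdiff (abs_nonneg _) hAN) hglow hSlow
  have ht2 : |W m * g (x m) y' * (S' - S) / (S * S')| ≤
      A / N * gup * ω / (glow * glow) := by
    rw [abs_div, abs_of_pos (mul_pos hSpos hS'pos), abs_mul, abs_mul,
      abs_of_nonneg hWmnn, abs_of_nonneg (le_trans hglow.le hgm'.1)]
    refine div_le_div₀ (mul_nonneg (mul_nonneg hAN (le_trans hglow.le (hgm'.1.trans hgm'.2))) hωnn)
      ?_ (mul_pos hglow hglow) (mul_le_mul hSlow hS'low hglow.le hSpos.le)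
    have h1 : W m * g (x m) y' ≤ A / N * gup :=
      mul_le_mul hWm hgm'.2 (le_trans hglow.le hgm'.1) hAN
    exact mul_le_mul h1 hSdiff (abs_nonneg _)
      (mul_nonneg hAN (le_trans hglow.le (hgm'.1.trans hgm'.2)))
  calc |W m * (g (x m) y - g (x m) y') / S + W m * g (x m) y' * (S' - S) / (S * S')|
      ≤ |W m * (g (x m) y - g (x m) y') / S| + |W m * g (x m) y' * (S' - S) / (S * S')| :=
        abs_add_le _ _
    _ ≤ A / N * ω / glow + A / N * gup * ω / (glow * glow) := add_le_add ht1 ht2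
    _ = A / (N * glow) * (1 + gup / glow) * ω := by
        field_simp
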